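/- (Weak type (1,1) bound in the proof of Paley's inequality) Let φ : L^⊥ → (0,∞) satisfy M_φ := sup_{s>0} s · #{κ ∈ L^⊥ : φ(κ) ≥ s} < ∞, and define μ{κ} = φ(κ)². Then for every f ∈ L^1(Ω) and every s > 0: Σ_{κ : |f̂(κ)|/φ(κ) ≥ s} φ(κ)² ≤ 2 M_φ ‖f‖_{L^1(Ω)} / s. -/

import Mathlib

open MeasureTheory Complex Real ENNReal

noncomputable section

/-- The lattice in `ℝ^d` generated by the columns of the matrix `A`, i.e. `A ℤ^d`. -/
def latticeOf {d : ℕ} (A : Matrix (Fin d) (Fin d) ℝ) : Set (Fin d → ℝ) :=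
  {x | ∃ k : Fin d → ℤ, x = A.mulVec (fun i => (k i : ℝ))}

/-- The dual lattice `L^⊥ = {κ : ∀ λ ∈ L, κ·λ ∈ ℤ}`. -/
def dualLattice {d : ℕ} (L : Set (Fin d → ℝ)) : Set (Fin d → ℝ) :=
  {κ | ∀ l ∈ L, ∃ n : ℤ, (∑ i, κ i * l i) = (n : ℝ)}

/-- `Ω` is a (measurable) fundamental domain of `L`: every `x ∈ ℝ^d` is uniquely
`ω + λ` with `ω ∈ Ω`, `λ ∈ L`. -/
def IsFundDomain {d : ℕ} (L Ω : Set (Fin d → ℝ)) : Prop :=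
  MeasurableSet Ω ∧ ∀ x : Fin d → ℝ, ∃! p : (Fin d → ℝ) × (Fin d → ℝ),
    p.1 ∈ Ω ∧ p.2 ∈ L ∧ x = p.1 + p.2

/-- The normalized measure `dx / m(Ω)` on the fundamental domain `Ω`. -/
def normMeasure {d : ℕ} (Ω : Set (Fin d → ℝ)) : Measure (Fin d → ℝ) :=
  (volume Ω)⁻¹ • volume.restrict Ω

/-- The Fourier coefficient `f̂(κ) = (1/m(Ω)) ∫_Ω f(x) e^{-2πi κ·x} dx`. -/
def fourierCoef {d : ℕ} (Ω : Set (Fin d → ℝ)) (f : (Fin d → ℝ) → ℂ)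
    (κ : Fin d → ℝ) : ℂ :=
  ∫ x, f x * Complex.exp (-2 * π * Complex.I * (∑ i, κ i * x i)) ∂(normMeasure Ω)

/-- Auxiliary: the complex exponential of a purely imaginary number has modulus 1. -/
lemma paley_aux_norm_exp (z : ℂ) (hz : z.im = 0) :
    ‖Complex.exp (-2 * ↑π * Complex.I * z)‖ = 1 := by
  rw [Complex.norm_exp]
  have h : (-2 * (π : ℂ) * Complex.I * z).re = 0 := by
    simp [Complex.mul_re, Complex.mul_im, hz]
  rw [h, Real.exp_zero]

/-- Auxiliary layer-cake formula for `a ^ 2`. -/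
lemma paley_aux_sq (a : ℝ) (ha : 0 < a) :
    ENNReal.ofReal (a ^ 2)
      = ∫⁻ t, (Set.Ioc (0 : ℝ) a).indicator (fun u => ENNReal.ofReal (2 * u)) t := by
  rw [lintegral_indicator measurableSet_Ioc,
    ← ofReal_integral_eq_lintegral_ofReal]
  · congr 1
    rw [← intervalIntegral.integral_of_le ha.le, intervalIntegral.integral_const_mul,
      integral_id]
    ring
  · exact (continuous_const.mul continuous_id).integrableOn_Ioc
  · filter_upwards [ae_restrict_mem measurableSet_Ioc] with t ht
    have := ht.1; positivity

theorem paley_weak_one_one {d : ℕ} (A : Matrix (Fin d) (Fin d) ℝ) (hA : IsUnit A.det)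
    (Ω : Set (Fin d → ℝ)) (hΩ : IsFundDomain (latticeOf A) Ω)
    (φ : (Fin d → ℝ) → ℝ) (hφ : ∀ κ ∈ dualLattice (latticeOf A), 0 < φ κ)
    (M : ℝ≥0∞) (hM : M ≠ ⊤)
    (hMb : ∀ s : ℝ, 0 < s →
      ENNReal.ofReal s * ({κ ∈ dualLattice (latticeOf A) | s ≤ φ κ}.encard : ℝ≥0∞) ≤ M)
    (f : (Fin d → ℝ) → ℂ) (hf : MemLp f 1 (normMeasure Ω)) (s : ℝ) (hs : 0 < s) :
    ∑' κ : {κ ∈ dualLattice (latticeOf A) | s ≤ ‖fourierCoef Ω f κ‖ / φ κ},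
        ENNReal.ofReal (φ ↑κ ^ 2)
      ≤ 2 * M * eLpNorm f 1 (normMeasure Ω) / ENNReal.ofReal s := by
  classical
  set μ := normMeasure Ω with hμdef
  set N := eLpNorm f 1 μ with hNdef
  have hN : N ≠ ⊤ := hf.eLpNorm_ne_top
  set L := dualLattice (latticeOf A) with hLdef
  set E : Set (Fin d → ℝ) := {κ ∈ L | s ≤ ‖fourierCoef Ω f κ‖ / φ κ} with hEdef
  set T : ℝ := N.toReal / s with hTdef
  -- Step 1 : the Fourier coefficients are bounded by the L¹ norm
  have hcoef : ∀ κ : Fin d → ℝ, (‖fourierCoef Ω f κ‖₊ : ℝ≥0∞) ≤ N := by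
    intro κ
    calc (‖fourierCoef Ω f κ‖₊ : ℝ≥0∞)
        ≤ ∫⁻ x, ‖f x * Complex.exp (-2 * π * Complex.I * (∑ i, κ i * x i))‖₊ ∂μ := by
          rw [fourierCoef, ← hμdef]
          exact enorm_integral_le_lintegral_enorm _
      _ = ∫⁻ x, ‖f x‖₊ ∂μ := by
          refine lintegral_congr fun x => ?_
          congr 1
          ext
          rw [coe_nnnorm, coe_nnnorm, norm_mul, paley_aux_norm_exp, mul_one]
          simp
      _ = N := (eLpNorm_one_eq_lintegral_enorm (f := f) (μ := μ)).symm
  -- Step 2 : on E, φ is bounded by T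
  have hφle : ∀ κ ∈ E, φ κ ≤ T := by
    intro κ hκ
    have hp : 0 < φ κ := hφ κ hκ.1
    have h1 : s * φ κ ≤ ‖fourierCoef Ω f κ‖ := by
      have h := hκ.2
      rw [le_div_iff₀ hp] at h
      linarith
    have h2 : ‖fourierCoef Ω f κ‖ ≤ N.toReal := by
      have h3 := ENNReal.toReal_mono hN (hcoef κ)
      simpa using h3
    rw [hTdef, le_div_iff₀ hs]
    nlinarith
  -- Step 3 : superlevel sets are finite
  have hfin : ∀ t : ℝ, 0 < t → ({κ ∈ L | t ≤ φ κ}).Finite := by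
    intro t ht
    rw [← Set.not_infinite]
    intro hinf
    have h := hMb t ht
    rw [hLdef] at hinf
    rw [Set.encard_eq_top_iff.mpr hinf] at h
    rw [ENat.toENNReal_top, ENNReal.mul_top (by simpa using ht.le.lt_of_ne' (by simpa using ht.ne'))] at h
    · exact hM (top_le_iff.mp h)
  -- Step 4 : E is countable
  have hEc : E.Countable := by
    have hsub : E ⊆ ⋃ n : ℕ, {κ ∈ L | 1 / (n + 1 : ℝ) ≤ φ κ} := by
      intro κ hκ
      obtain ⟨n, hn⟩ := exists_nat_one_div_lt (hφ κ hκ.1)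
      exact Set.mem_iUnion.2 ⟨n, hκ.1, hn.le⟩
    exact ((Set.countable_iUnion fun n => (hfin _ (by positivity)).countable).mono hsub)
  haveI : Countable E := hEc.to_subtype
  -- Step 5 : pointwise bound on the summed indicator
  have hpt : ∀ t : ℝ,
      (∑' κ : E, (Set.Ioc (0:ℝ) (φ (κ : Fin d → ℝ))).indicator
          (fun u => ENNReal.ofReal (2 * u)) t)
        ≤ (Set.Ioc (0:ℝ) T).indicator (fun _ => 2 * M) t := by
    intro t
    by_cases htT : t ∈ Set.Ioc (0:ℝ) T
    · rw [Set.indicator_of_mem htT]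
      have ht : 0 < t := htT.1
      set F : Set (Fin d → ℝ) := {κ ∈ L | t ≤ φ κ} with hFdef
      calc (∑' κ : E, (Set.Ioc (0:ℝ) (φ (κ : Fin d → ℝ))).indicator
              (fun u => ENNReal.ofReal (2 * u)) t)
          ≤ ∑' κ : E, F.indicator (fun _ => ENNReal.ofReal (2 * t)) (κ : Fin d → ℝ) := by
            refine ENNReal.tsum_le_tsum fun κ => ?_
            by_cases hmem : t ∈ Set.Ioc (0:ℝ) (φ (κ : Fin d → ℝ))
            · rw [Set.indicator_of_mem hmem,
                Set.indicator_of_mem (show (κ : Fin d → ℝ) ∈ F from ⟨κ.2.1, hmem.2⟩)]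
            · rw [Set.indicator_of_notMem hmem]; exact zero_le'
        _ = ∑' κ : (Fin d → ℝ),
              E.indicator (F.indicator fun _ => ENNReal.ofReal (2 * t)) κ :=
            tsum_subtype E _
        _ ≤ ∑' κ : (Fin d → ℝ), F.indicator (fun _ => ENNReal.ofReal (2 * t)) κ :=
            ENNReal.tsum_le_tsum fun κ => Set.indicator_le_self E _ κ
        _ = ∑' _ : F, ENNReal.ofReal (2 * t) := (tsum_subtype F _).symm
        _ = F.encard * ENNReal.ofReal (2 * t) := ENNReal.tsum_set_const _ _
        _ ≤ 2 * M := by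
            have h := hMb t ht
            rw [← hFdef] at h
            calc (F.encard : ℝ≥0∞) * ENNReal.ofReal (2 * t)
                = 2 * (ENNReal.ofReal t * F.encard) := by
                  rw [ENNReal.ofReal_mul (by norm_num : (0:ℝ) ≤ 2)]
                  rw [ENNReal.ofReal_ofNat]
                  ring
              _ ≤ 2 * M := mul_le_mul_right h 2
    · rw [Set.indicator_of_notMem htT]
      have hz : ∀ κ : E, (Set.Ioc (0:ℝ) (φ (κ : Fin d → ℝ))).indicator
          (fun u => ENNReal.ofReal (2 * u)) t = 0 := by
        intro κ
        apply Set.indicator_of_notMem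
        rintro ⟨h1, h2⟩
        exact htT ⟨h1, h2.trans (hφle _ κ.2)⟩
      rw [tsum_congr hz, tsum_zero]
  -- Final computation
  calc (∑' κ : E, ENNReal.ofReal (φ (κ : Fin d → ℝ) ^ 2))
      = ∑' κ : E, ∫⁻ t, (Set.Ioc (0:ℝ) (φ (κ : Fin d → ℝ))).indicator
          (fun u => ENNReal.ofReal (2 * u)) t :=
        tsum_congr fun κ => paley_aux_sq _ (hφ _ κ.2.1)
    _ = ∫⁻ t, ∑' κ : E, (Set.Ioc (0:ℝ) (φ (κ : Fin d → ℝ))).indicator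
          (fun u => ENNReal.ofReal (2 * u)) t :=
        (lintegral_tsum fun κ =>
          ((measurable_const.mul measurable_id).ennreal_ofReal.indicator
            measurableSet_Ioc).aemeasurable).symm
    _ ≤ ∫⁻ t, (Set.Ioc (0:ℝ) T).indicator (fun _ => 2 * M) t := lintegral_mono hpt
    _ = 2 * M * volume (Set.Ioc (0:ℝ) T) := by
        rw [lintegral_indicator measurableSet_Ioc, setLIntegral_const]
    _ ≤ 2 * M * N / ENNReal.ofReal s := by
        rw [Real.volume_Ioc, sub_zero, hTdef, ENNReal.ofReal_div_of_pos hs,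
          ENNReal.ofReal_toReal hN, ENNReal.div_eq_inv_mul, ENNReal.div_eq_inv_mul]
        ring_nf
        exact le_refl _
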